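/- arXiv:1302.2543 — 4 statements merged into one kernel-verified Lean document; each statement's English description precedes it below -/
import Mathlib

section
/- Let d ≥ 1 and f ≥ 1 be integers, and let y₁, …, y_N be a family of N ≥ (d+1)f + 1 points in ℝ^d (points may repeat). Then Γ(y) is non-empty; that is, the intersection over all subsets T of {1, …, N} with |T| = N − f of the convex hulls conv{y_i : i ∈ T} is non-empty. -/
/-- For `d ≥ 1`, `f ≥ 1` and a family of `N ≥ (d+1)f + 1` points in `ℝ^d`,
the intersection, over all subsets `T` of the index set with `|T| = N - f`, of the convex
hulls `conv {y i : i ∈ T}` is non-empty. -/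
theorem gamma_nonempty (d f N : ℕ) (hd : 1 ≤ d) (hf : 1 ≤ f)
    (hN : (d + 1) * f + 1 ≤ N) (y : Fin N → (Fin d → ℝ)) :
    (⋂ (T : Finset (Fin N)) (_ : T.card = N - f),
        convexHull ℝ (y '' (T : Set (Fin N)))).Nonempty := by
  classical
  set s : Finset (Finset (Fin N)) :=
    Finset.univ.filter (fun T => T.card = N - f) with hs
  have hNpos : 0 < N := by omega
  have hfN : f ≤ N := le_trans (Nat.le_mul_of_pos_left f (by omega)) (Nat.le_of_succ_le hN)
  have key : (⋂ T ∈ s, convexHull ℝ (y '' (T : Set (Fin N)))).Nonempty := by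
    apply Convex.helly_theorem' (𝕜 := ℝ)
    · intro T _; exact convex_convexHull ℝ _
    · intro I hI hIcard
      have hrank : Module.finrank ℝ (Fin d → ℝ) = d := by simp
      rw [hrank] at hIcard
      -- there is an index i belonging to all T ∈ I
      have : ∃ i : Fin N, ∀ T ∈ I, i ∈ T := by
        by_contra h
        push_neg at h
        -- every i is outside some T ∈ I, i.e. in the union of complements
        have hsub : (Finset.univ : Finset (Fin N)) ⊆ I.biUnion (fun T => Tᶜ) := by
          intro i _
          obtain ⟨T, hT, hiT⟩ := h i
          exact Finset.mem_biUnion.2 ⟨T, hT, Finset.mem_compl.2 hiT⟩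
        have hcard : N ≤ (I.biUnion (fun T => Tᶜ)).card := by
          simpa using Finset.card_le_card hsub
        have hle : (I.biUnion (fun T => Tᶜ)).card ≤ I.card * f := by
          refine le_trans (Finset.card_biUnion_le) ?_
          rw [Finset.sum_const_nat]
          intro T hT
          have hTs := hI hT
          rw [hs, Finset.mem_filter] at hTs
          rw [Finset.card_compl, hTs.2]
          simp only [Fintype.card_fin]
          omega
        have : I.card * f ≤ (d + 1) * f := Nat.mul_le_mul_right f hIcard
        omega
      obtain ⟨i, hi⟩ := this
      refine ⟨y i, Set.mem_iInter₂.2 fun T hT => ?_⟩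
      exact subset_convexHull ℝ _ ⟨i, by simpa using hi T hT, rfl⟩
  obtain ⟨x, hx⟩ := key
  refine ⟨x, Set.mem_iInter₂.2 fun T hT => ?_⟩
  exact Set.mem_iInter₂.1 hx T (by simp [hs, hT])
end

section
/- (Tverberg's theorem.) For any integers d ≥ 1 and f ≥ 1, and for every family of points y₁, …, y_N in ℝ^d (points may repeat) with N ≥ (d+1)f + 1, there exists a partition of the index set {1, …, N} into f + 1 non-empty pairwise disjoint subsets I₁, …, I_{f+1} such that the intersection ⋂_{l=1}^{f+1} conv{y_i : i ∈ I_l} is non-empty. -/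
open Finset Metric

variable {E : Type*} [NormedAddCommGroup E] [InnerProductSpace ℝ E]

local notation "⟪" x ", " y "⟫" => @inner ℝ _ _ x y

/-- If `z, x` lie in a convex set `K` and `⟪z, x⟫ < ⟪z, z⟫`, some point of `K`
has norm strictly smaller than `z`. -/
lemma tv_improve {K : Set E} (hK : Convex ℝ K) {z x : E} (hz : z ∈ K) (hx : x ∈ K)
    (h : ⟪z, x⟫ < ⟪z, z⟫) : ∃ w ∈ K, ‖w‖ < ‖z‖ := by
  have hxz : x ≠ z := by rintro rfl; exact lt_irrefl _ h
  set a : ℝ := ⟪z, z⟫ - ⟪z, x⟫ with ha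
  have hapos : 0 < a := sub_pos.mpr h
  set b : ℝ := ‖x - z‖ ^ 2 with hb
  have hbpos : 0 < b := by
    have hne : x - z ≠ 0 := sub_ne_zero.mpr hxz
    rw [hb]
    exact pow_pos (norm_pos_iff.mpr hne) 2
  set t : ℝ := min 1 (a / b) with htdef
  have ht0 : 0 < t := lt_min one_pos (div_pos hapos hbpos)
  have ht1 : t ≤ 1 := min_le_left _ _
  have htb : t * b ≤ a := by
    have : t ≤ a / b := min_le_right _ _
    calc t * b ≤ (a / b) * b := by nlinarith
      _ = a := by field_simp
  refine ⟨(1 - t) • z + t • x, hK hz hx (by linarith) (le_of_lt ht0) (by ring), ?_⟩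
  have hexp : (1 - t) • z + t • x = z + t • (x - z) := by
    rw [smul_sub, sub_smul, one_smul]; abel
  rw [hexp]
  have hsq : ‖z + t • (x - z)‖ ^ 2 = ‖z‖ ^ 2 - 2 * t * a + t ^ 2 * b := by
    rw [norm_add_sq_real, norm_smul, real_inner_smul_right, inner_sub_right]
    simp [ha, hb, mul_pow]
    ring
  have hlt : ‖z + t • (x - z)‖ ^ 2 < ‖z‖ ^ 2 := by
    rw [hsq]; nlinarith
  by_contra hcon
  push_neg at hcon
  have := pow_le_pow_left₀ (norm_nonneg z) hcon 2
  linarith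

/-- **Bárány's colorful Carathéodory theorem**. -/
theorem tv_colorful [FiniteDimensional ℝ E] {n : ℕ}
    (hn : Module.finrank ℝ E < n) (S : Fin n → Finset E)
    (hS : ∀ i, (0 : E) ∈ convexHull ℝ (S i : Set E)) :
    ∃ c : Fin n → E, (∀ i, c i ∈ S i) ∧ (0 : E) ∈ convexHull ℝ (Set.range c) := by
  classical
  have hne : ∀ i, (S i).Nonempty := by
    intro i
    rcases (S i).eq_empty_or_nonempty with h | h
    · have := hS i; rw [h] at this; simpa using this
    · exact h
  have hpine : (Fintype.piFinset S).Nonempty :=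
    ⟨fun i => (hne i).choose, Fintype.mem_piFinset.mpr fun i => (hne i).choose_spec⟩
  obtain ⟨T, hTmem, hTmin⟩ := Finset.exists_min_image (Fintype.piFinset S)
    (fun T => infDist 0 (convexHull ℝ (Set.range T))) hpine
  have hT : ∀ i, T i ∈ S i := Fintype.mem_piFinset.mp hTmem
  have hnpos : 0 < n := lt_of_le_of_lt (Nat.zero_le _) hn
  haveI : Nonempty (Fin n) := ⟨⟨0, hnpos⟩⟩
  set K := convexHull ℝ (Set.range T) with hKdef
  have hKcompact : IsCompact K := (Set.finite_range T).isCompact_convexHull ℝ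
  have hKne : K.Nonempty := ⟨T ⟨0, hnpos⟩, subset_convexHull ℝ _ (Set.mem_range_self _)⟩
  obtain ⟨z, hzK, hzdist⟩ := hKcompact.exists_infDist_eq_dist hKne 0
  by_cases hz0 : z = 0
  · exact ⟨T, hT, hz0 ▸ hzK⟩
  have hmin : ∀ y ∈ K, ‖z‖ ≤ ‖y‖ := by
    intro y hy
    have h1 : infDist 0 K ≤ dist 0 y := infDist_le_dist_of_mem hy
    rw [hzdist] at *
    simpa [dist_zero_left] using h1
  have hsupp : ∀ y ∈ K, ⟪z, z⟫ ≤ ⟪z, y⟫ := by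
    intro y hy
    by_contra hcon
    push_neg at hcon
    obtain ⟨w, hwK, hwlt⟩ := tv_improve (convex_convexHull ℝ _) hzK hy hcon
    exact absurd (hmin w hwK) (not_le.mpr hwlt)
  obtain ⟨ι', hfin, pz, w, hrange, haff, hwpos, hwsum, hwz⟩ :=
    eq_pos_convex_span_of_mem_convexHull (𝕜 := ℝ) hzK
  letI := hfin
  haveI : Nonempty ι' := by
    by_contra hcon
    rw [not_nonempty_iff] at hcon
    haveI := hcon
    simp [Finset.univ_eq_empty] at hwsum
  -- each pz i has inner product ⟪z, z⟫ with z
  have hgez : ∀ i, ⟪z, z⟫ ≤ ⟪z, pz i⟫ := fun i =>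
    hsupp _ (subset_convexHull ℝ _ (hrange (Set.mem_range_self i)))
  have hinner : ∀ i, ⟪z, pz i⟫ = ⟪z, z⟫ := by
    have hsum0 : ∑ i, w i * (⟪z, pz i⟫ - ⟪z, z⟫) = 0 := by
      have h1 : ∑ i, w i * ⟪z, pz i⟫ = ⟪z, z⟫ := by
        rw [← hwz, inner_sum]
        exact Finset.sum_congr rfl fun i _ => (real_inner_smul_right _ _ _).symm
      have h2 : ∑ i, w i * ⟪z, z⟫ = ⟪z, z⟫ := by rw [← Finset.sum_mul, hwsum, one_mul]
      simp only [mul_sub, Finset.sum_sub_distrib, h1, h2, sub_self]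
    intro i
    have := (Finset.sum_eq_zero_iff_of_nonneg (fun i _ =>
      mul_nonneg (le_of_lt (hwpos i)) (sub_nonneg.mpr (hgez i)))).mp hsum0 i (mem_univ i)
    have hwi := hwpos i
    have : ⟪z, pz i⟫ - ⟪z, z⟫ = 0 := by
      rcases mul_eq_zero.mp this with h | h
      · exact absurd h (ne_of_gt hwi)
      · exact h
    linarith
  classical
  obtain ⟨i1⟩ := (inferInstance : Nonempty ι')
  let F : E →ₗ[ℝ] ℝ :=
    { toFun := fun v => ⟪z, v⟫
      map_add' := fun u v => inner_add_right z u v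
      map_smul' := fun c u => by simp [real_inner_smul_right] }
  have hzz : (0 : ℝ) < ⟪z, z⟫ := by
    rw [real_inner_self_eq_norm_sq]
    exact pow_pos (norm_pos_iff.mpr hz0) 2
  have hFz : F z ≠ 0 := ne_of_gt hzz
  have hker : LinearMap.ker F < ⊤ := by
    rw [lt_top_iff_ne_top]
    intro h
    exact hFz (LinearMap.mem_ker.mp (h ▸ Submodule.mem_top (x := z)))
  have hkerlt : Module.finrank ℝ (LinearMap.ker F) < Module.finrank ℝ E :=
    Submodule.finrank_lt hker.ne
  have hli : LinearIndependent ℝ fun i : {x : ι' // x ≠ i1} => pz ↑i - pz i1 := by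
    have h := (affineIndependent_iff_linearIndependent_vsub ℝ pz i1).mp haff
    simpa [vsub_eq_sub] using h
  have hmem : ∀ i : {x : ι' // x ≠ i1}, pz ↑i - pz i1 ∈ LinearMap.ker F := by
    intro i
    rw [LinearMap.mem_ker]
    show ⟪z, pz ↑i - pz i1⟫ = 0
    rw [inner_sub_right, hinner, hinner, sub_self]
  have hcard' : Fintype.card {x : ι' // x ≠ i1} ≤ Module.finrank ℝ (LinearMap.ker F) := by
    have hlig : LinearIndependent ℝ
        (fun i : {x : ι' // x ≠ i1} => (⟨pz ↑i - pz i1, hmem i⟩ : LinearMap.ker F)) := by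
      apply LinearIndependent.of_comp (LinearMap.ker F).subtype
      exact hli
    exact hlig.fintype_card_le_finrank
  have hcardι : Fintype.card ι' ≤ Module.finrank ℝ E := by
    have h1 : Fintype.card {x : ι' // x ≠ i1} = Fintype.card ι' - 1 := by
      rw [Fintype.card_subtype_compl (· = i1), Fintype.card_subtype_eq]
    have h2 : 1 ≤ Fintype.card ι' := Fintype.card_pos
    omega
  have hex : ∀ i : ι', ∃ a : Fin n, T a = pz i := fun i => hrange (Set.mem_range_self i)
  choose g' hg' using hex
  have hi0ex : ∃ i0 : Fin n, i0 ∉ Finset.univ.image g' := by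
    by_contra h
    push_neg at h
    have hsub : (univ : Finset (Fin n)) ⊆ Finset.univ.image g' := fun x _ => h x
    have hcard := Finset.card_le_card hsub
    have := Finset.card_image_le (s := (univ : Finset ι')) (f := g')
    simp only [Finset.card_univ, Fintype.card_fin] at hcard this
    omega
  obtain ⟨i0, hi0⟩ := hi0ex
  have hx : ∃ x ∈ S i0, ⟪z, x⟫ ≤ 0 := by
    by_contra h
    push_neg at h
    have hconv : (convexHull ℝ (S i0 : Set E)) ⊆ {v | 0 < ⟪z, v⟫} := by
      apply convexHull_min
      · intro u hu
        exact h u (by exact_mod_cast hu)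
      · exact convex_halfSpace_gt
          (⟨fun u v => inner_add_right z u v,
            fun c u => by simp [real_inner_smul_right]⟩ : IsLinearMap ℝ fun v => ⟪z, v⟫) 0
    have := hconv (hS i0)
    simp at this
  obtain ⟨x, hxS, hxz⟩ := hx
  set T' := Function.update T i0 x with hT'def
  have hT'mem : T' ∈ Fintype.piFinset S := by
    rw [Fintype.mem_piFinset]
    intro i
    by_cases h : i = i0
    · rw [h, hT'def, Function.update_self]; exact hxS
    · rw [hT'def, Function.update_of_ne h]; exact hT i
  have hzK' : z ∈ convexHull ℝ (Set.range T') := by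
    have hcm : Finset.univ.centerMass w pz = z := by
      rw [Finset.centerMass_eq_of_sum_1 _ _ hwsum]; exact hwz
    rw [← hcm]
    apply Finset.centerMass_mem_convexHull _ (fun i _ => le_of_lt (hwpos i))
      (by rw [hwsum]; exact one_pos)
    intro i _
    have hne' : g' i ≠ i0 := by
      intro h
      exact hi0 (h ▸ Finset.mem_image_of_mem g' (mem_univ i))
    exact ⟨g' i, by rw [hT'def, Function.update_of_ne hne']; exact hg' i⟩
  have hxK' : x ∈ convexHull ℝ (Set.range T') :=
    subset_convexHull ℝ _ ⟨i0, by rw [hT'def, Function.update_self]⟩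
  obtain ⟨w', hw'K, hw'lt⟩ := tv_improve (convex_convexHull ℝ _) hzK' hxK'
    (lt_of_le_of_lt hxz hzz)
  have h1 : infDist 0 K ≤ infDist 0 (convexHull ℝ (Set.range T')) := hTmin T' hT'mem
  have h2 : infDist 0 (convexHull ℝ (Set.range T')) ≤ ‖w'‖ := by
    have := infDist_le_dist_of_mem (x := (0 : E)) hw'K
    rwa [dist_zero_left] at this
  rw [hzdist, dist_zero_left] at h1
  linarith

/-- Extract convex weights indexed by the original finite index type. -/
lemma tv_weights {M : Type} [AddCommGroup M] [Module ℝ M] {n : ℕ} (c : Fin n → M)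
    (h : (0 : M) ∈ convexHull ℝ (Set.range c)) :
    ∃ w : Fin n → ℝ, (∀ i, 0 ≤ w i) ∧ ∑ i, w i = 1 ∧ ∑ i, w i • c i = 0 := by
  classical
  obtain ⟨ι, hfin, zz, w, hrange, _, hwpos, hwsum, hwz⟩ :=
    eq_pos_convex_span_of_mem_convexHull (𝕜 := ℝ) h
  letI := hfin
  have hex : ∀ i : ι, ∃ a : Fin n, c a = zz i := fun i => hrange (Set.mem_range_self i)
  choose g hg using hex
  refine ⟨fun a => ∑ i ∈ univ.filter (fun i => g i = a), w i,
    fun a => Finset.sum_nonneg (fun i _ => le_of_lt (hwpos i)), ?_, ?_⟩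
  · rw [Finset.sum_fiberwise univ g w]
    exact hwsum
  · have h1 : ∀ a : Fin n, (∑ i ∈ univ.filter (fun i => g i = a), w i) • c a
        = ∑ i ∈ univ.filter (fun i => g i = a), w i • zz i := by
      intro a
      rw [Finset.sum_smul]
      refine Finset.sum_congr rfl fun i hi => ?_
      rw [show c a = zz i from by rw [← (Finset.mem_filter.mp hi).2, hg]]
    rw [Finset.sum_congr rfl fun a _ => h1 a,
      Finset.sum_fiberwise univ g (fun i => w i • zz i)]
    exact hwz

/-- Tverberg's theorem: for `d ≥ 1`, `f ≥ 1`, and a family of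
`N ≥ (d+1)f + 1` points in `ℝ^d`, there is a partition of the index set
into `f + 1` non-empty pairwise disjoint parts whose convex hulls have a common point. -/
theorem tverberg (d f N : ℕ) (hd : 1 ≤ d) (hf : 1 ≤ f)
    (hN : (d + 1) * f + 1 ≤ N) (y : Fin N → (Fin d → ℝ)) :
    ∃ I : Fin (f + 1) → Finset (Fin N),
      (∀ l, (I l).Nonempty) ∧
      (∀ l l', l ≠ l' → Disjoint (I l) (I l')) ∧
      (Finset.univ.biUnion I = Finset.univ) ∧
      (⋂ l : Fin (f + 1), convexHull ℝ (y '' ((I l) : Set (Fin N)))).Nonempty := by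
  classical
  set E := EuclideanSpace ℝ (Fin (d + 1) × Fin f) with hEdef
  have hrank : Module.finrank ℝ E = (d + 1) * f := by
    show Module.finrank ℝ (EuclideanSpace ℝ (Fin (d + 1) × Fin f)) = (d + 1) * f
    simp [finrank_euclideanSpace, Fintype.card_prod, Fintype.card_fin]
  -- lifted points
  set abar : Fin N → Fin (d + 1) → ℝ :=
    fun i k => if h : (k : ℕ) < d then y i ⟨k, h⟩ else 1 with habar
  set v : Fin (f + 1) → Fin f → ℝ :=
    fun j l => (if j = Fin.castSucc l then 1 else 0) - (if j = Fin.last f then 1 else 0) with hv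
  have hvsum : ∀ l : Fin f, ∑ j : Fin (f + 1), v j l = 0 := by
    intro l
    simp [hv, Finset.sum_sub_distrib]
  set b : Fin N → Fin (f + 1) → E :=
    fun i j => (WithLp.toLp 2 (fun p : Fin (d + 1) × Fin f => abar i p.1 * v j p.2) : EuclideanSpace ℝ (Fin (d + 1) × Fin f)) with hb
  set S : Fin N → Finset E := fun i => Finset.image (b i) Finset.univ with hS
  have hbsum : ∀ i, ∑ j, b i j = 0 := by
    intro i
    ext p
    have := map_sum (EuclideanSpace.projₗ (𝕜 := ℝ) (ι := Fin (d + 1) × Fin f) p)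
      (fun j => b i j) Finset.univ
    rw [show ((∑ j, b i j) p : ℝ) = ∑ j, b i j p from this]
    simp only [hb]
    rw [← Finset.mul_sum, hvsum p.2, mul_zero]
    rfl
  have hSmem : ∀ i, (0 : E) ∈ convexHull ℝ (S i : Set E) := by
    intro i
    have hcm : (Finset.univ : Finset (Fin (f + 1))).centerMass (fun _ => (1 : ℝ)) (b i) = 0 := by
      rw [Finset.centerMass]
      simp only [one_smul]
      rw [hbsum i, smul_zero]
    rw [← hcm]
    exact Finset.centerMass_mem_convexHull _ (fun _ _ => zero_le_one)
      (by simp; positivity) (fun j _ => Finset.mem_image_of_mem _ (mem_univ j))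
  have hrank' : Module.finrank ℝ E < N := by rw [hrank]; omega
  obtain ⟨c, hc, hc0⟩ := tv_colorful hrank' S hSmem
  have hcj : ∀ i, ∃ j, b i j = c i := by
    intro i
    obtain ⟨j, _, hj⟩ := Finset.mem_image.mp (hc i)
    exact ⟨j, hj⟩
  choose j hj using hcj
  obtain ⟨w, hw0, hw1, hwsum⟩ := tv_weights c hc0
  rw [show (∑ i, w i • c i) = ∑ i, w i • b i (j i) from
    Finset.sum_congr rfl fun i _ => by rw [hj]] at hwsum
  -- coordinate equations
  have hcoord : ∀ (k : Fin (d + 1)) (l : Fin f),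
      ∑ i, w i * (abar i k * v (j i) l) = 0 := by
    intro k l
    have hmap := map_sum (EuclideanSpace.projₗ (𝕜 := ℝ) (ι := Fin (d + 1) × Fin f) (k, l))
      (fun i => w i • b i (j i)) Finset.univ
    rw [hwsum, map_zero] at hmap
    rw [show ∑ i, w i * (abar i k * v (j i) l)
        = ∑ x, (EuclideanSpace.projₗ (𝕜 := ℝ) (ι := Fin (d + 1) × Fin f) (k, l))
            (w x • b x (j x)) from Finset.sum_congr rfl fun x _ => rfl, ← hmap]
  set A : Fin (f + 1) → Finset (Fin N) := fun l => univ.filter (fun i => j i = l) with hA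
  have hsig : ∀ (k : Fin (d + 1)) (l : Fin f),
      ∑ i ∈ A (Fin.castSucc l), w i * abar i k = ∑ i ∈ A (Fin.last f), w i * abar i k := by
    intro k l
    have h := hcoord k l
    have hterm : ∀ i : Fin N, w i * (abar i k * v (j i) l) =
        (if j i = Fin.castSucc l then w i * abar i k else 0)
          - (if j i = Fin.last f then w i * abar i k else 0) := by
      intro i
      simp only [hv]
      split_ifs <;> ring
    rw [Finset.sum_congr rfl fun i _ => hterm i, Finset.sum_sub_distrib,
      ← Finset.sum_filter, ← Finset.sum_filter] at h
    rw [hA]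
    linarith
  have hsig' : ∀ (k : Fin (d + 1)) (l : Fin (f + 1)),
      ∑ i ∈ A l, w i * abar i k = ∑ i ∈ A (Fin.last f), w i * abar i k := by
    intro k l
    induction l using Fin.lastCases with
    | last => rfl
    | cast l => exact hsig k l
  have habar1 : ∀ i, abar i (Fin.last d) = 1 := by
    intro i
    simp [habar]
  set t : ℝ := ∑ i ∈ A (Fin.last f), w i with ht
  have htau : ∀ l, ∑ i ∈ A l, w i = t := by
    intro l
    have h := hsig' (Fin.last d) l
    simpa [habar1] using h
  have hsum1 : ∑ l : Fin (f + 1), ∑ i ∈ A l, w i = 1 := by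
    rw [hA]
    rw [Finset.sum_fiberwise univ j w]
    exact hw1
  have htval : (f + 1 : ℝ) * t = 1 := by
    rw [Finset.sum_congr rfl fun l _ => htau l, Finset.sum_const, Finset.card_univ,
      Fintype.card_fin, nsmul_eq_mul] at hsum1
    exact_mod_cast hsum1
  have htpos : 0 < t := by
    nlinarith [htval]
  have hAne : ∀ l, (A l).Nonempty := by
    intro l
    rcases (A l).eq_empty_or_nonempty with h | h
    · exfalso
      have := htau l
      rw [h, Finset.sum_empty] at this
      linarith
    · exact h
  -- the common point
  set q : Fin d → ℝ := (A (Fin.last f)).centerMass w y with hq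
  have habar2 : ∀ (i : Fin N) (k' : Fin d), abar i (Fin.castSucc k') = y i k' := by
    intro i k'
    have hlt : ((Fin.castSucc k' : Fin (d + 1)) : ℕ) < d := k'.isLt
    simp only [habar]
    rw [dif_pos hlt]
    exact congrArg (y i) (Fin.ext (by simp))
  have hqmem : ∀ l, q ∈ convexHull ℝ (y '' ((A l) : Set (Fin N))) := by
    intro l
    have hcmeq : (A l).centerMass w y = q := by
      rw [hq, Finset.centerMass, Finset.centerMass, htau l, htau (Fin.last f)]
      congr 1
      ext k'
      rw [Finset.sum_apply, Finset.sum_apply]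
      have h1 : ∀ (l' : Fin (f + 1)), ∑ i ∈ A l', (w i • y i) k' =
          ∑ i ∈ A l', w i * abar i (Fin.castSucc k') := by
        intro l'
        exact Finset.sum_congr rfl fun i _ => by
          rw [Pi.smul_apply, smul_eq_mul, habar2]
      rw [h1, h1, hsig' (Fin.castSucc k') l]
    rw [← hcmeq]
    refine Finset.centerMass_mem_convexHull _ (fun i _ => hw0 i) ?_ ?_
    · rw [htau l]; exact htpos
    · intro i hi
      exact Set.mem_image_of_mem y (by exact_mod_cast hi)
  refine ⟨A, hAne, ?_, ?_, ⟨q, Set.mem_iInter.mpr hqmem⟩⟩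
  · intro l l' hll'
    rw [Finset.disjoint_left]
    intro i hi hi'
    rw [hA, Finset.mem_filter] at hi hi'
    exact hll' (hi.2 ▸ hi'.2 ▸ rfl)
  · ext i
    simp only [Finset.mem_biUnion, Finset.mem_univ, iff_true, true_and]
    exact ⟨j i, by rw [hA]; simp⟩
end

section
/- Let m ≥ 1, let x₁, …, x_m be real numbers, and let γ be a real number with 0 < γ ≤ 1. Suppose α₁, …, α_m and β₁, …, β_m are non-negative reals with Σ_{k=1}^{m} α_k = 1 and Σ_{k=1}^{m} β_k = 1, and suppose there is an index g with α_g ≥ γ and β_g ≥ γ. Then |Σ_{k=1}^{m} α_k x_k − Σ_{k=1}^{m} β_k x_k| ≤ (1 − γ)·(max_{1≤k≤m} x_k − min_{1≤k≤m} x_k). -/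
lemma aux_sum_bounds {m : ℕ} (x : Fin m → ℝ) (L M : ℝ)
    (hxM : ∀ k, x k ≤ M) (hxL : ∀ k, L ≤ x k)
    (d : Fin m → ℝ) (hd : ∀ k, 0 ≤ d k) (s : ℝ) (hs : ∑ k, d k = s) :
    s * L ≤ ∑ k, d k * x k ∧ ∑ k, d k * x k ≤ s * M := by
  constructor
  · calc s * L = ∑ k, d k * L := by rw [← Finset.sum_mul, hs]
    _ ≤ ∑ k, d k * x k :=
      Finset.sum_le_sum fun k _ => mul_le_mul_of_nonneg_left (hxL k) (hd k)
  · calc ∑ k, d k * x k ≤ ∑ k, d k * M :=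
      Finset.sum_le_sum fun k _ => mul_le_mul_of_nonneg_left (hxM k) (hd k)
    _ = s * M := by rw [← Finset.sum_mul, hs]

lemma aux_shift {m : ℕ} (x : Fin m → ℝ) (L M γ : ℝ)
    (hxM : ∀ k, x k ≤ M) (hxL : ∀ k, L ≤ x k)
    (c : Fin m → ℝ) (hc : ∀ k, 0 ≤ c k) (hcs : ∑ k, c k = 1)
    (g : Fin m) (hcg : γ ≤ c g) :
    (1 - γ) * L ≤ (∑ k, c k * x k) - γ * x g ∧
      (∑ k, c k * x k) - γ * x g ≤ (1 - γ) * M := by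
  set d : Fin m → ℝ := fun k => c k - (if k = g then γ else 0) with hd
  have hd0 : ∀ k, 0 ≤ d k := by
    intro k
    by_cases h : k = g <;> simp [hd, h]
    · subst h; linarith
    · exact hc k
  have hds : ∑ k, d k = 1 - γ := by
    simp only [hd, Finset.sum_sub_distrib, hcs, Finset.sum_ite_eq', Finset.mem_univ, if_true]
  have hdx : ∑ k, d k * x k = (∑ k, c k * x k) - γ * x g := by
    simp only [hd, sub_mul, Finset.sum_sub_distrib]
    congr 1
    rw [Finset.sum_congr rfl (fun k _ => by rw [ite_mul, zero_mul]),
      Finset.sum_ite_eq' Finset.univ g (fun k => γ * x k)]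
    simp
  have := aux_sum_bounds x L M hxM hxL d hd0 (1 - γ) hds
  rw [hdx] at this
  exact this

/-- two convex combinations of the reals `x 1, …, x m` that both give
weight at least `γ` to a common index `g` differ by at most `(1 - γ)` times the range
`max x - min x`. -/
theorem convex_combinations_close (m : ℕ) (hm : 1 ≤ m) (x : Fin m → ℝ)
    (γ : ℝ) (hγ0 : 0 < γ) (hγ1 : γ ≤ 1)
    (α β : Fin m → ℝ) (hα : ∀ k, 0 ≤ α k) (hβ : ∀ k, 0 ≤ β k)
    (hαs : ∑ k, α k = 1) (hβs : ∑ k, β k = 1)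
    (g : Fin m) (hαg : γ ≤ α g) (hβg : γ ≤ β g) :
    |(∑ k, α k * x k) - ∑ k, β k * x k| ≤
      (1 - γ) * ((⨆ k, x k) - ⨅ k, x k) := by
  haveI : Nonempty (Fin m) := ⟨⟨0, hm⟩⟩
  set M := ⨆ k, x k with hM
  set L := ⨅ k, x k with hL
  have hxM : ∀ k, x k ≤ M := fun k => le_ciSup (Set.Finite.bddAbove (Set.finite_range x)) k
  have hxL : ∀ k, L ≤ x k := fun k => ciInf_le (Set.Finite.bddBelow (Set.finite_range x)) k
  obtain ⟨ha1, ha2⟩ := aux_shift x L M γ hxM hxL α hα hαs g hαg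
  obtain ⟨hb1, hb2⟩ := aux_shift x L M γ hxM hxL β hβ hβs g hβg
  rw [abs_sub_le_iff]
  constructor <;> nlinarith
end

section
/- Let m ≥ 1, let γ be a real number with 0 < γ ≤ 1, and let v₁, …, v_m and v'₁, …, v'_m be real numbers. Suppose there is an m×m matrix M with non-negative entries whose rows each sum to 1, such that v'_i = Σ_{k=1}^{m} M_{ik} v_k for every i, and such that for every pair of indices i, j there exists an index g(i,j) with M_{i,g(i,j)} ≥ γ and M_{j,g(i,j)} ≥ γ. Then max_{1≤i≤m} v'_i − min_{1≤i≤m} v'_i ≤ (1 − γ)·(max_{1≤k≤m} v_k − min_{1≤k≤m} v_k). -/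
/-- one row-stochastic averaging round, in which every pair of rows
shares a column where both entries are at least `γ`, contracts the range of the values
by the factor `(1 - γ)`. -/
theorem averaging_contracts_range (m : ℕ) (hm : 1 ≤ m)
    (γ : ℝ) (hγ0 : 0 < γ) (hγ1 : γ ≤ 1)
    (v v' : Fin m → ℝ) (M : Fin m → Fin m → ℝ)
    (hMnn : ∀ i k, 0 ≤ M i k) (hMrow : ∀ i, ∑ k, M i k = 1)
    (hupd : ∀ i, v' i = ∑ k, M i k * v k)
    (hpair : ∀ i j, ∃ g, γ ≤ M i g ∧ γ ≤ M j g) :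
    (⨆ i, v' i) - (⨅ i, v' i) ≤ (1 - γ) * ((⨆ k, v k) - ⨅ k, v k) := by
  haveI : Nonempty (Fin m) := ⟨⟨0, hm⟩⟩
  set a := ⨅ k, v k with ha
  set b := ⨆ k, v k with hb
  have hva : ∀ k, a ≤ v k := fun k => ciInf_le ((Set.finite_range v).bddBelow) k
  have hvb : ∀ k, v k ≤ b := fun k => le_ciSup ((Set.finite_range v).bddAbove) k
  have hab : a ≤ b := le_trans (hva (Classical.arbitrary _)) (hvb _)
  have key : ∀ i j : Fin m, v' i - v' j ≤ (1 - γ) * (b - a) := by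
    intro i j
    obtain ⟨g, hig, hjg⟩ := hpair i j
    have h1 : v' i - v' j = ∑ k, (M i k - M j k) * (v k - a) := by
      have e : ∑ k, (M i k - M j k) * (v k - a)
          = (∑ k, M i k * v k) - (∑ k, M j k * v k)
            - ((∑ k, M i k) - (∑ k, M j k)) * a := by
        simp only [sub_mul, mul_sub, Finset.sum_sub_distrib, Finset.sum_mul]
      rw [hupd i, hupd j, e, hMrow i, hMrow j]
      ring
    have h2 : ∀ k, (M i k - M j k) * (v k - a)
        ≤ (M i k - min (M i k) (M j k)) * (b - a) := by
      intro k
      rcases le_or_gt (M i k) (M j k) with h | h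
      · rw [min_eq_left h]
        have : (M i k - M j k) * (v k - a) ≤ 0 :=
          mul_nonpos_of_nonpos_of_nonneg (by linarith) (by linarith [hva k])
        simpa using this
      · rw [min_eq_right h.le]
        exact mul_le_mul (le_refl _) (by linarith [hvb k]) (by linarith [hva k])
          (by linarith)
    have h3 : ∑ k, (M i k - min (M i k) (M j k)) * (b - a)
        = (1 - ∑ k, min (M i k) (M j k)) * (b - a) := by
      rw [← Finset.sum_mul, Finset.sum_sub_distrib, hMrow i]
    have h4 : γ ≤ ∑ k, min (M i k) (M j k) := by
      have := Finset.single_le_sum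
        (f := fun k => min (M i k) (M j k))
        (fun k _ => le_min (hMnn i k) (hMnn j k)) (Finset.mem_univ g)
      exact le_trans (le_min hig hjg) this
    calc v' i - v' j = ∑ k, (M i k - M j k) * (v k - a) := h1
      _ ≤ ∑ k, (M i k - min (M i k) (M j k)) * (b - a) :=
          Finset.sum_le_sum (fun k _ => h2 k)
      _ = (1 - ∑ k, min (M i k) (M j k)) * (b - a) := h3
      _ ≤ (1 - γ) * (b - a) := by
          apply mul_le_mul_of_nonneg_right _ (by linarith)
          linarith
  obtain ⟨i0, hi0⟩ := Finite.exists_max v'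
  obtain ⟨j0, hj0⟩ := Finite.exists_min v'
  have hs : (⨆ i, v' i) ≤ v' i0 := ciSup_le hi0
  have hi : v' j0 ≤ ⨅ i, v' i := le_ciInf hj0
  have := key i0 j0
  linarith
end
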